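/- Let X be a real Banach space and x ∈ B_X. Then Δc_X(x) = Δc_{X**}(J(x)), where J : X → X** is the canonical isometric embedding of X into its bidual; i.e., the Δ-constant of x computed in X equals the Δ-constant of J(x) computed in the bidual X**. -/

import Mathlib

open Set Metric Filter

variable {X : Type*} [NormedAddCommGroup X] [NormedSpace ℝ X]

/-- The slice `S(f, δ)` of the closed unit ball of `X`, determined by a norm-one functional
`f` and `δ > 0` (the norm and positivity conditions are imposed at use sites). -/
def unitBallSlice (f : X →L[ℝ] ℝ) (δ : ℝ) : Set X :=
  {y | ‖y‖ ≤ 1 ∧ 1 - δ < f y}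

/-- The Daugavet constant of a point: the infimum over all slices of the unit ball of the
supremum of distances from `x` to points of the slice. -/
noncomputable def Dc (x : X) : ℝ :=
  sInf {r | ∃ (f : X →L[ℝ] ℝ) (δ : ℝ), ‖f‖ = 1 ∧ 0 < δ ∧
    r = sSup ((fun y => ‖x - y‖) '' unitBallSlice f δ)}

/-- The Δ-constant of a point: the infimum over all slices of the unit ball containing `x`
of the supremum of distances from `x` to points of the slice. -/
noncomputable def DeltaC (x : X) : ℝ :=
  sInf {r | ∃ (f : X →L[ℝ] ℝ) (δ : ℝ), ‖f‖ = 1 ∧ 0 < δ ∧ x ∈ unitBallSlice f δ ∧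
    r = sSup ((fun y => ‖x - y‖) '' unitBallSlice f δ)}

open NormedSpace

lemma norm_incl (z : X) : ‖inclusionInDoubleDual ℝ X z‖ = ‖z‖ :=
  (inclusionInDoubleDualLi ℝ (E := X)).norm_map z

lemma slice_nonempty (f : X →L[ℝ] ℝ) (hf : ‖f‖ = 1) {δ : ℝ} (hδ : 0 < δ) :
    (unitBallSlice f δ).Nonempty := by
  obtain ⟨y, hy, hfy⟩ := f.exists_lt_apply_of_lt_opNorm (show 1 - δ < ‖f‖ by rw [hf]; linarith)
  rcases le_or_gt 0 (f y) with h | h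
  · exact ⟨y, hy.le, by rwa [Real.norm_eq_abs, abs_of_nonneg h] at hfy⟩
  · refine ⟨-y, by simpa using hy.le, ?_⟩
    rw [map_neg]
    rwa [Real.norm_eq_abs, abs_of_neg h] at hfy

lemma bddAbove_dist_image (x : X) (s : Set X) (hs : s ⊆ {y : X | ‖y‖ ≤ 1}) :
    BddAbove ((fun y => ‖x - y‖) '' s) := by
  refine ⟨‖x‖ + 1, ?_⟩
  rintro r ⟨y, hy, rfl⟩
  have := hs hy
  calc ‖x - y‖ ≤ ‖x‖ + ‖y‖ := norm_sub_le _ _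
    _ ≤ ‖x‖ + 1 := by simpa using this

lemma mem_closure_pair (f g : X →L[ℝ] ℝ) (F : StrongDual ℝ (StrongDual ℝ X)) (hF : ‖F‖ ≤ 1) :
    ((F f, F g) : ℝ × ℝ) ∈ closure ((fun y => (f y, g y)) '' {y : X | ‖y‖ ≤ 1}) := by
  by_contra hc
  set K := (fun y => (f y, g y)) '' {y : X | ‖y‖ ≤ 1} with hK
  have hKconv : Convex ℝ K := by
    have : K = ⇑(f.prod g) '' closedBall (0 : X) 1 := by
      ext p; simp [hK, Metric.mem_closedBall, dist_zero_right, ContinuousLinearMap.prod_apply]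
    rw [this]
    exact (convex_closedBall (0 : X) 1).linear_image (f.prod g).toLinearMap
  obtain ⟨φ, u, hlt, hgt⟩ :=
    geometric_hahn_banach_closed_point hKconv.closure isClosed_closure hc
  set a := φ (1, 0) with ha
  set b := φ (0, 1) with hb
  have hφ : ∀ p : ℝ × ℝ, φ p = a * p.1 + b * p.2 := by
    intro p
    have : p = p.1 • ((1 : ℝ), (0 : ℝ)) + p.2 • ((0 : ℝ), (1 : ℝ)) := by
      ext <;> simp
    rw [this, map_add, map_smul, map_smul, ← ha, ← hb]
    simp [smul_eq_mul]; ring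
  have hu0 : 0 < u := by
    have h0 : ((0 : ℝ), (0 : ℝ)) ∈ closure K := by
      apply subset_closure
      exact ⟨0, by simp [hK], by simp⟩
    have := hlt _ h0
    simpa [hφ] using this
  set h : X →L[ℝ] ℝ := a • f + b • g with hh
  have hhy : ∀ y : X, ‖y‖ ≤ 1 → h y < u := by
    intro y hy
    have := hlt _ (subset_closure ⟨y, hy, rfl⟩)
    rw [hφ] at this
    simpa [hh, ContinuousLinearMap.add_apply, ContinuousLinearMap.smul_apply] using this
  have hnorm : ‖h‖ ≤ u := by
    apply ContinuousLinearMap.opNorm_le_of_unit_norm hu0.le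
    intro z hz
    rw [Real.norm_eq_abs, abs_le]
    constructor
    · have := hhy (-z) (by simp [hz])
      rw [map_neg] at this; linarith
    · exact (hhy z hz.le).le
  have hFh : F h = a * F f + b * F g := by
    simp [hh, map_add, map_smul, smul_eq_mul]
  have hF1 : F h ≤ u := by
    calc F h ≤ |F h| := le_abs_self _
      _ ≤ ‖F‖ * ‖h‖ := by simpa [Real.norm_eq_abs] using F.le_opNorm h
      _ ≤ 1 * u := by
          apply mul_le_mul hF hnorm (norm_nonneg _) zero_le_one
      _ = u := one_mul u
  rw [hφ] at hgt
  simp only at hgt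
  rw [hFh] at hF1
  linarith

lemma norm_sub_le_sSup (f : X →L[ℝ] ℝ) {δ : ℝ} (x : X)
    (F : StrongDual ℝ (StrongDual ℝ X)) (hF1 : ‖F‖ ≤ 1) (hF2 : 1 - δ < F f) :
    ‖inclusionInDoubleDual ℝ X x - F‖ ≤ sSup ((fun y => ‖x - y‖) '' unitBallSlice f δ) := by
  set J := inclusionInDoubleDual ℝ X with hJ
  set M := sSup ((fun y => ‖x - y‖) '' unitBallSlice f δ) with hM
  refine le_of_forall_pos_le_add ?_
  intro ε hε
  obtain ⟨g, hg, hgr⟩ := (J x - F).exists_lt_apply_of_lt_opNorm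
    (show ‖J x - F‖ - ε / 2 < ‖J x - F‖ by linarith)
  have hgx : (J x - F) g = g x - F g := by simp [hJ]
  set ε' := min (ε / 2) (F f - (1 - δ)) with hε'
  have hε'pos : 0 < ε' := lt_min (by linarith) (by linarith)
  have hmem := mem_closure_pair f g F hF1
  rw [Metric.mem_closure_iff] at hmem
  obtain ⟨p, hpK, hpd⟩ := hmem ε' hε'pos
  obtain ⟨y, hy, rfl⟩ := hpK
  rw [Prod.dist_eq, max_lt_iff] at hpd
  obtain ⟨hd1, hd2⟩ := hpd
  rw [Real.dist_eq] at hd1 hd2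
  simp only at hd1 hd2
  have hfy : 1 - δ < f y := by
    have h1 : F f - f y ≤ |F f - f y| := le_abs_self _
    have h2 : ε' ≤ F f - (1 - δ) := min_le_right _ _
    linarith
  have hyM : ‖x - y‖ ≤ M := le_csSup (bddAbove_dist_image x _ (fun z hz => hz.1))
    ⟨y, ⟨hy, hfy⟩, rfl⟩
  have h3 : |g x - g y| ≤ ‖x - y‖ := by
    have h := g.le_opNorm (x - y)
    rw [map_sub, Real.norm_eq_abs] at h
    calc |g x - g y| ≤ ‖g‖ * ‖x - y‖ := h
      _ ≤ 1 * ‖x - y‖ := mul_le_mul_of_nonneg_right hg.le (norm_nonneg _)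
      _ = ‖x - y‖ := one_mul _
  have h2 : |g x - F g| ≤ |g x - g y| + |g y - F g| := abs_sub_le _ _ _
  have h4 : |g y - F g| < ε' := by rw [abs_sub_comm]; exact hd2
  have h5 : ε' ≤ ε / 2 := min_le_left _ _
  have h1 : ‖J x - F‖ - ε / 2 < |g x - F g| := by
    rw [hgx, Real.norm_eq_abs] at hgr; linarith
  linarith

lemma sSup_slice_eq (f : X →L[ℝ] ℝ) (hf : ‖f‖ = 1) {δ : ℝ} (hδ : 0 < δ) (x : X) :
    sSup ((fun F => ‖inclusionInDoubleDual ℝ X x - F‖) ''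
        unitBallSlice (inclusionInDoubleDual ℝ (X →L[ℝ] ℝ) f) δ)
      = sSup ((fun y => ‖x - y‖) '' unitBallSlice f δ) := by
  set J := inclusionInDoubleDual ℝ X with hJ
  obtain ⟨y₀, hy₀⟩ := slice_nonempty f hf hδ
  have hJy : ∀ y : X, y ∈ unitBallSlice f δ →
      J y ∈ unitBallSlice (inclusionInDoubleDual ℝ (X →L[ℝ] ℝ) f) δ := by
    intro y hy
    refine ⟨?_, ?_⟩
    · rw [hJ, norm_incl]; exact hy.1
    · exact hy.2
  apply le_antisymm
  · apply csSup_le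
    · exact ⟨_, ⟨J y₀, hJy y₀ hy₀, rfl⟩⟩
    · rintro r ⟨F, ⟨hF1, hF2⟩, rfl⟩
      exact norm_sub_le_sSup f x F hF1 hF2
  · apply csSup_le_csSup
    · exact bddAbove_dist_image (J x) _ (fun F hF => hF.1)
    · exact ⟨_, ⟨y₀, hy₀, rfl⟩⟩
    · rintro r ⟨y, hy, rfl⟩
      refine ⟨J y, hJy y hy, ?_⟩
      show ‖J x - J y‖ = ‖x - y‖
      rw [← map_sub, hJ, norm_incl]

/-- The Δ-constant of `x ∈ B_X` computed in `X` equals the Δ-constant of its image in the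
bidual `X**` under the canonical isometric embedding. -/
theorem deltaConstant_bidual [CompleteSpace X] (x : X) (hx : ‖x‖ ≤ 1) :
    DeltaC x = DeltaC (NormedSpace.inclusionInDoubleDual ℝ X x) := by
  letI : NormedAddCommGroup (StrongDual ℝ (StrongDual ℝ X)) := inferInstance
  letI : NormedSpace ℝ (StrongDual ℝ (StrongDual ℝ X)) := inferInstance
  rcases subsingleton_or_nontrivial X with hX | hX
  · -- trivial space: both index sets are empty
    have h1 : ∀ f : X →L[ℝ] ℝ, ‖f‖ ≠ 1 := by
      intro f
      have hf : f = 0 := by ext z; rw [Subsingleton.elim z (0 : X)]; simp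
      rw [hf]; simp
    haveI hd1 : Subsingleton (StrongDual ℝ X) :=
      ⟨fun f g => by ext z; rw [Subsingleton.elim z (0 : X)]; simp⟩
    haveI hd2 : Subsingleton (StrongDual ℝ (StrongDual ℝ X)) :=
      ⟨fun f g => by ext z; rw [Subsingleton.elim z (0 : StrongDual ℝ X)]; simp⟩
    have h2 : ∀ f : StrongDual ℝ (StrongDual ℝ X) →L[ℝ] ℝ, ‖f‖ ≠ 1 := by
      intro f
      have hf : f = 0 := by ext z; rw [Subsingleton.elim z (0 : StrongDual ℝ (StrongDual ℝ X))]; simp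
      rw [hf]; simp
    unfold DeltaC
    congr 1
    ext r
    simp only [mem_setOf_eq]
    constructor
    · rintro ⟨f, δ, hf, _⟩; exact absurd hf (h1 f)
    · rintro ⟨f, δ, hf, _⟩; exact absurd hf (h2 f)
  · obtain ⟨z, hz⟩ := exists_ne (0 : X)
    obtain ⟨g₀, hg₀, -⟩ := exists_dual_vector ℝ z (norm_ne_zero_iff.mpr hz)
    have hxg₀ : x ∈ unitBallSlice g₀ 3 := by
      refine ⟨hx, ?_⟩
      have h := g₀.le_opNorm x
      rw [hg₀, one_mul, Real.norm_eq_abs] at h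
      have h2 : -1 ≤ g₀ x := by
        have := neg_abs_le (g₀ x); linarith
      linarith
    set A := {r | ∃ (f : X →L[ℝ] ℝ) (δ : ℝ), ‖f‖ = 1 ∧ 0 < δ ∧ x ∈ unitBallSlice f δ ∧
        r = sSup ((fun y => ‖x - y‖) '' unitBallSlice f δ)} with hA
    set B := {r | ∃ (f : StrongDual ℝ (StrongDual ℝ X) →L[ℝ] ℝ) (δ : ℝ), ‖f‖ = 1 ∧ 0 < δ ∧
        inclusionInDoubleDual ℝ X x ∈ unitBallSlice f δ ∧
        r = sSup ((fun F => ‖inclusionInDoubleDual ℝ X x - F‖) '' unitBallSlice f δ)} with hB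
    have hDx : DeltaC x = sInf A := rfl
    have hDJ : DeltaC (inclusionInDoubleDual ℝ X x) = sInf B := rfl
    rw [hDx, hDJ]
    have hAne : A.Nonempty :=
      ⟨_, g₀, 3, hg₀, by norm_num, hxg₀, rfl⟩
    have hAB : A ⊆ B := by
      rintro r ⟨f, δ, hf, hδ, hxS, rfl⟩
      refine ⟨inclusionInDoubleDual ℝ (X →L[ℝ] ℝ) f, δ, ?_, hδ, ⟨?_, ?_⟩, ?_⟩
      · rw [norm_incl]; exact hf
      · rw [norm_incl]; exact hx
      · exact hxS.2
      · exact (sSup_slice_eq f hf hδ x).symm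
    have hBne : B.Nonempty := hAne.mono hAB
    have hBnonneg : ∀ r ∈ B, (0 : ℝ) ≤ r := by
      rintro r ⟨f, δ, hf, hδ, hxS, rfl⟩
      have h0 : (0 : ℝ) ∈ (fun F => ‖inclusionInDoubleDual ℝ X x - F‖) '' unitBallSlice f δ :=
        ⟨inclusionInDoubleDual ℝ X x, hxS, by simp⟩
      exact le_csSup (bddAbove_dist_image (inclusionInDoubleDual ℝ X x) _ (fun F hF => hF.1)) h0
    have hAnonneg : ∀ r ∈ A, (0 : ℝ) ≤ r := by
      rintro r ⟨f, δ, hf, hδ, hxS, rfl⟩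
      have h0 : (0 : ℝ) ∈ (fun y => ‖x - y‖) '' unitBallSlice f δ := ⟨x, hxS, by simp⟩
      exact le_csSup (bddAbove_dist_image x _ (fun y hy => hy.1)) h0
    have bddA : BddBelow A := ⟨0, fun r hr => hAnonneg r hr⟩
    have bddB : BddBelow B := ⟨0, fun r hr => hBnonneg r hr⟩
    apply le_antisymm
    · -- sInf A ≤ sInf B
      refine le_csInf hBne ?_
      rintro r ⟨Φ, δ, hΦ, hδ, ⟨hJx1, hJx2⟩, rfl⟩
      set f : X →L[ℝ] ℝ := Φ.comp (inclusionInDoubleDual ℝ X) with hfdef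
      have hfx : 1 - δ < f x := hJx2
      suffices h : ∃ (g : X →L[ℝ] ℝ) (δ' : ℝ), ‖g‖ = 1 ∧ 0 < δ' ∧ x ∈ unitBallSlice g δ' ∧
          ∀ y ∈ unitBallSlice g δ', 1 - δ < Φ (inclusionInDoubleDual ℝ X y) by
        obtain ⟨g, δ', hg, hδ', hxg, hsub⟩ := h
        have ha : sSup ((fun y => ‖x - y‖) '' unitBallSlice g δ') ∈ A :=
          ⟨g, δ', hg, hδ', hxg, rfl⟩
        refine (csInf_le bddA ha).trans ?_
        refine csSup_le_csSup
          (bddAbove_dist_image (inclusionInDoubleDual ℝ X x) _ fun F hF => hF.1)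
          ⟨_, ⟨x, hxg, rfl⟩⟩ ?_
        rintro s ⟨y, hy, rfl⟩
        refine ⟨inclusionInDoubleDual ℝ X y, ⟨?_, hsub y hy⟩, ?_⟩
        · rw [norm_incl]; exact hy.1
        · show ‖inclusionInDoubleDual ℝ X x - inclusionInDoubleDual ℝ X y‖ = ‖x - y‖
          rw [← map_sub, norm_incl]
      by_cases hf0 : f = 0
      · refine ⟨g₀, 3, hg₀, by norm_num, hxg₀, ?_⟩
        intro y _
        have h1 : Φ (inclusionInDoubleDual ℝ X y) = f y := rfl
        have h2 : f x = 0 := by rw [hf0]; rfl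
        have h3 : f y = 0 := by rw [hf0]; rfl
        rw [h1, h3]
        linarith
      · have hn : 0 < ‖f‖ := norm_pos_iff.mpr hf0
        have hfxle : f x ≤ ‖f‖ := by
          have h := f.le_opNorm x
          rw [Real.norm_eq_abs] at h
          nlinarith [le_abs_self (f x), norm_nonneg f]
        have h1δ : 1 - δ < ‖f‖ := lt_of_lt_of_le hfx hfxle
        refine ⟨‖f‖⁻¹ • f, 1 - (1 - δ) / ‖f‖, ?_, ?_, ⟨hx, ?_⟩, ?_⟩
        · have hns := norm_smul (‖f‖⁻¹) f
          rw [hns, norm_inv, norm_norm, inv_mul_cancel₀ hn.ne']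
        · have : (1 - δ) / ‖f‖ < 1 := (div_lt_one hn).mpr h1δ
          linarith
        · show 1 - (1 - (1 - δ) / ‖f‖) < (‖f‖⁻¹ • f) x
          have h1 : 1 - (1 - (1 - δ) / ‖f‖) = (1 - δ) / ‖f‖ := by ring
          rw [h1]
          have h2 : (‖f‖⁻¹ • f) x = ‖f‖⁻¹ * f x := rfl
          rw [h2, div_eq_inv_mul]
          exact mul_lt_mul_of_pos_left hfx (inv_pos.mpr hn)
        · intro y hy
          have hgy : (1 - δ) / ‖f‖ < (‖f‖⁻¹ • f) y := by
            have := hy.2; linarith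
          have h3 : (‖f‖⁻¹ • f) y = ‖f‖⁻¹ * f y := rfl
          rw [h3] at hgy
          have h4 : 1 - δ < f y := by
            have h5 : ‖f‖ * ((1 - δ) / ‖f‖) < ‖f‖ * (‖f‖⁻¹ * f y) :=
              mul_lt_mul_of_pos_left hgy hn
            rw [mul_div_cancel₀ _ hn.ne'] at h5
            have h6 : ‖f‖ * (‖f‖⁻¹ * f y) = f y := by field_simp
            linarith
          exact h4
    · -- sInf B ≤ sInf A
      exact le_csInf hAne fun r hr => csInf_le bddB (hAB hr)
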